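/- Let G be a simple edge-Δ-critical graph, xy ∈ E(G), φ ∈ C^Δ(G - xy), and q a positive number with d(x) < q ≤ Δ - 1. Let Z = {z ∈ N(x) \ {y} : d(z) > q and φ(xz) ∈ φ̄(y)}. Then Σ_{z∈Z} (d(z) - q) ≥ (Δ - d(y) + 1)(Δ - q) - d(x) - d(y) + Δ + 2. -/

import Mathlib

open Finset
open scoped Classical

variable {V : Type*}

/-- `φ` is a proper edge coloring of `G` using colors `{1,…,k}`. -/
def IsProperEdgeColoring (G : SimpleGraph V) (k : ℕ) (φ : Sym2 V → ℕ) : Prop :=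
  (∀ e ∈ G.edgeSet, φ e ∈ Finset.Icc 1 k) ∧
  ∀ e ∈ G.edgeSet, ∀ f ∈ G.edgeSet, e ≠ f → (∃ v, v ∈ e ∧ v ∈ f) → φ e ≠ φ f

/-- The set of colors of `{1,…,k}` missing at `v` under `φ`. -/
noncomputable def missing (G : SimpleGraph V) (k : ℕ) (φ : Sym2 V → ℕ) (v : V) : Finset ℕ :=
  (Finset.Icc 1 k).filter (fun c => ∀ u, G.Adj v u → φ s(v, u) ≠ c)

/-- `G` is edge-`Δ`-critical: max degree `Δ`, `χ' = Δ+1`, and every proper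
subgraph is edge-`Δ`-colorable. -/
def EdgeCritical (G : SimpleGraph V) [Fintype V] (Δ : ℕ) : Prop :=
  G.maxDegree = Δ ∧
  ¬ (∃ φ, IsProperEdgeColoring G Δ φ) ∧
  (∃ φ, IsProperEdgeColoring G (Δ + 1) φ) ∧
  ∀ H : SimpleGraph V, H < G → ∃ φ, IsProperEdgeColoring H Δ φ

namespace Stmt8Aux

lemma mem_missing_iff {G : SimpleGraph V} {k : ℕ} {φ : Sym2 V → ℕ} {v : V} {c : ℕ} :
    c ∈ missing G k φ v ↔ c ∈ Finset.Icc 1 k ∧ ∀ u, G.Adj v u → φ s(v, u) ≠ c := by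
  simp [missing]

/-- at most one edge of each color at each vertex -/
lemma color_inj {G : SimpleGraph V} {k : ℕ} {φ : Sym2 V → ℕ}
    (hφ : IsProperEdgeColoring G k φ) {v u u' : V} (h : G.Adj v u) (h' : G.Adj v u')
    (hne : u ≠ u') : φ s(v, u) ≠ φ s(v, u') := by
  refine hφ.2 _ (G.mem_edgeSet.mpr h) _ (G.mem_edgeSet.mpr h') ?_
    ⟨v, by simp, by simp⟩
  intro hh
  rw [Sym2.eq_iff] at hh
  rcases hh with ⟨-, rfl⟩ | ⟨rfl, rfl⟩
  · exact hne rfl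
  · exact G.loopless.irrefl _ h

/-- a color in the palette that is not missing is present on an edge -/
lemma exists_edge_of_not_missing {G : SimpleGraph V} {k : ℕ} {φ : Sym2 V → ℕ} {v : V} {c : ℕ}
    (hc : c ∈ Finset.Icc 1 k) (h : c ∉ missing G k φ v) :
    ∃ u, G.Adj v u ∧ φ s(v, u) = c := by
  by_contra hn
  push_neg at hn
  exact h (mem_missing_iff.mpr ⟨hc, fun u hu => hn u hu⟩)

lemma missing_subset_Icc {G : SimpleGraph V} {k : ℕ} {φ : Sym2 V → ℕ} {v : V} :
    missing G k φ v ⊆ Finset.Icc 1 k := Finset.filter_subset _ _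

/-- palette ≤ missing + degree -/
lemma palette_le [Fintype V] (G : SimpleGraph V) [DecidableRel G.Adj] (k : ℕ) (φ : Sym2 V → ℕ) (v : V) :
    k ≤ (missing G k φ v).card + G.degree v := by
  have hsub : Finset.Icc 1 k ⊆
      missing G k φ v ∪ (G.neighborFinset v).image (fun u => φ s(v, u)) := by
    intro c hcIcc
    by_cases h : c ∈ missing G k φ v
    · exact Finset.mem_union_left _ h
    · obtain ⟨u, hu, he⟩ := exists_edge_of_not_missing hcIcc h
      exact Finset.mem_union_right _
        (Finset.mem_image.mpr ⟨u, (G.mem_neighborFinset v u).mpr hu, he⟩)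
  calc k = (Finset.Icc 1 k).card := by simp
    _ ≤ (missing G k φ v ∪ (G.neighborFinset v).image (fun u => φ s(v, u))).card :=
        Finset.card_le_card hsub
    _ ≤ (missing G k φ v).card + ((G.neighborFinset v).image (fun u => φ s(v, u))).card :=
        Finset.card_union_le _ _
    _ ≤ (missing G k φ v).card + G.degree v := by
        gcongr
        exact (Finset.card_image_le).trans_eq (G.card_neighborFinset_eq_degree v)

lemma missing_mono {G H : SimpleGraph V} (hHG : H ≤ G) {k : ℕ} {φ : Sym2 V → ℕ} {v : V} :
    missing G k φ v ⊆ missing H k φ v := by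
  intro c hc
  rw [mem_missing_iff] at hc ⊢
  exact ⟨hc.1, fun u hu => hc.2 u (hHG hu)⟩

lemma proper_mono {G H : SimpleGraph V} (hHG : H ≤ G) {k : ℕ} {φ : Sym2 V → ℕ}
    (hφ : IsProperEdgeColoring G k φ) : IsProperEdgeColoring H k φ := by
  have hE : H.edgeSet ⊆ G.edgeSet := SimpleGraph.edgeSet_mono hHG
  exact ⟨fun e he => hφ.1 e (hE he), fun e he f hf => hφ.2 e (hE he) f (hE hf)⟩

/-- Filling an uncolored edge with a color missing at both ends gives a proper coloring. -/
lemma proper_update {G : SimpleGraph V} {k : ℕ} {φ : Sym2 V → ℕ} {a b : V} (hab : G.Adj a b)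
    (hφ : IsProperEdgeColoring (G.deleteEdges {s(a, b)}) k φ) {c : ℕ}
    (hca : c ∈ missing (G.deleteEdges {s(a, b)}) k φ a)
    (hcb : c ∈ missing (G.deleteEdges {s(a, b)}) k φ b) :
    IsProperEdgeColoring G k (fun e => if e = s(a, b) then c else φ e) := by
  have hcIcc : c ∈ Finset.Icc 1 k := missing_subset_Icc hca
  have hedge : ∀ {e : Sym2 V}, e ∈ G.edgeSet → e ≠ s(a, b) →
      e ∈ (G.deleteEdges {s(a, b)}).edgeSet := by
    intro e he hne
    rw [SimpleGraph.edgeSet_deleteEdges]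
    exact ⟨he, by simpa using hne⟩
  have hshape : ∀ {e : Sym2 V} {v : V}, e ∈ (G.deleteEdges {s(a, b)}).edgeSet → v ∈ e →
      ∃ u, (G.deleteEdges {s(a, b)}).Adj v u ∧ e = s(v, u) := by
    intro e v he hv
    induction e using Sym2.ind with
    | _ p q =>
      rw [SimpleGraph.mem_edgeSet] at he
      rcases Sym2.mem_iff.mp hv with rfl | rfl
      · exact ⟨q, he, rfl⟩
      · exact ⟨p, he.symm, Sym2.eq_swap⟩
  have hmiss : ∀ {f : Sym2 V} {v : V}, f ∈ (G.deleteEdges {s(a, b)}).edgeSet → v ∈ f →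
      c ∈ missing (G.deleteEdges {s(a, b)}) k φ v → φ f ≠ c := by
    intro f v hf hv hm
    obtain ⟨u, hu, rfl⟩ := hshape hf hv
    exact (mem_missing_iff.mp hm).2 u hu
  constructor
  · intro e he
    by_cases h : e = s(a, b)
    · simpa [h] using hcIcc
    · simp only [if_neg h]
      exact hφ.1 e (hedge he h)
  · intro e he f hf hef hshare
    obtain ⟨v, hv1, hv2⟩ := hshare
    by_cases h1 : e = s(a, b) <;> by_cases h2 : f = s(a, b)
    · exact absurd (h1.trans h2.symm) hef
    · simp only [if_pos h1, if_neg h2]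
      have hf' := hedge hf h2
      subst h1
      rcases Sym2.mem_iff.mp hv1 with rfl | rfl
      · exact (hmiss hf' hv2 hca).symm
      · exact (hmiss hf' hv2 hcb).symm
    · simp only [if_neg h1, if_pos h2]
      have he' := hedge he h1
      subst h2
      rcases Sym2.mem_iff.mp hv2 with rfl | rfl
      · exact hmiss he' hv1 hca
      · exact hmiss he' hv1 hcb
    · simp only [if_neg h1, if_neg h2]
      exact hφ.2 e (hedge he h1) f (hedge hf h2) hef ⟨v, hv1, hv2⟩

end Stmt8Aux

section Kempe

open Stmt8Aux

variable (G : SimpleGraph V) (φ : Sym2 V → ℕ) (β γ : ℕ)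

/-- The subgraph of edges colored `β` or `γ`. -/
def chainGraph : SimpleGraph V where
  Adj u v := G.Adj u v ∧ (φ s(u, v) = β ∨ φ s(u, v) = γ)
  symm := by
    refine ⟨fun u v h => ?_⟩
    refine ⟨h.1.symm, ?_⟩
    rw [Sym2.eq_swap]
    exact h.2
  loopless := ⟨fun v h => G.loopless.irrefl v h.1⟩

variable (w : V)

/-- Swap the colors `β`,`γ` on the connected component of `w` in the two-colored subgraph. -/
noncomputable def kempeSwap : Sym2 V → ℕ :=
  fun e => if e ∈ (chainGraph G φ β γ).edgeSet ∧ (∃ v ∈ e, (chainGraph G φ β γ).Reachable w v)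
    then (if φ e = β then γ else β) else φ e

lemma chainGraph_le : chainGraph G φ β γ ≤ G := fun _ _ h => h.1

lemma kempeSwap_eq_of_not_mem {e : Sym2 V} (h : φ e ≠ β) (h' : φ e ≠ γ) :
    kempeSwap G φ β γ w e = φ e := by
  rw [kempeSwap, if_neg]
  rintro ⟨he, -⟩
  induction e using Sym2.ind with
  | _ u v => exact ((chainGraph G φ β γ).mem_edgeSet.mp he).2.elim h h'

lemma kempeSwap_eq_of_not_reachable {a u : V} (ha : ¬ (chainGraph G φ β γ).Reachable w a)
    (hu : G.Adj a u) : kempeSwap G φ β γ w s(a, u) = φ s(a, u) := by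
  rw [kempeSwap, if_neg]
  rintro ⟨he, v, hv, hr⟩
  have he' : (chainGraph G φ β γ).Adj a u := he
  rcases Sym2.mem_iff.mp hv with rfl | rfl
  · exact ha hr
  · exact ha (hr.trans he'.symm.reachable)

lemma kempeSwap_proper {k : ℕ} (hφ : IsProperEdgeColoring G k φ)
    (hβ : β ∈ Finset.Icc 1 k) (hγ : γ ∈ Finset.Icc 1 k) (hβγ : β ≠ γ) :
    IsProperEdgeColoring G k (kempeSwap G φ β γ w) := by
  set H := chainGraph G φ β γ with hH
  have hcol : ∀ {e : Sym2 V}, e ∈ H.edgeSet → φ e = β ∨ φ e = γ := by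
    intro e he
    induction e using Sym2.ind with
    | _ p q => exact (H.mem_edgeSet.mp he).2
  have hreach : ∀ {e : Sym2 V}, e ∈ H.edgeSet → (∃ v ∈ e, H.Reachable w v) →
      ∀ v ∈ e, H.Reachable w v := by
    intro e he hex v hv
    induction e using Sym2.ind with
    | _ p q =>
      have hadj : H.Adj p q := H.mem_edgeSet.mp he
      obtain ⟨u, hu, hru⟩ := hex
      rcases Sym2.mem_iff.mp hu with rfl | rfl <;> rcases Sym2.mem_iff.mp hv with rfl | rfl
      · exact hru
      · exact hru.trans hadj.reachable
      · exact hru.trans hadj.symm.reachable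
      · exact hru
  constructor
  · intro e he
    rw [kempeSwap]
    split
    · split
      · exact hγ
      · exact hβ
    · exact hφ.1 e he
  · intro e he f hf hef hshare
    obtain ⟨v, hv1, hv2⟩ := hshare
    have hne := hφ.2 e he f hf hef ⟨v, hv1, hv2⟩
    by_cases h1 : e ∈ H.edgeSet ∧ ∃ u ∈ e, H.Reachable w u <;>
      by_cases h2 : f ∈ H.edgeSet ∧ ∃ u ∈ f, H.Reachable w u
    · simp only [kempeSwap]
      rw [if_pos h1, if_pos h2]
      rcases hcol h1.1 with hce | hce <;> rcases hcol h2.1 with hcf | hcf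
      · exact absurd (hce.trans hcf.symm) hne
      · rw [if_pos hce, if_neg (by rw [hcf]; exact (Ne.symm hβγ))]
        exact hβγ.symm
      · rw [if_neg (by rw [hce]; exact (Ne.symm hβγ)), if_pos hcf]
        exact hβγ
      · exact absurd (hce.trans hcf.symm) hne
    · simp only [kempeSwap]
      rw [if_pos h1, if_neg h2]
      have hfcol : φ f ≠ β ∧ φ f ≠ γ := by
        constructor <;> intro hcf <;> refine h2 ⟨?_, v, hv2, hreach h1.1 h1.2 v hv1⟩
        · induction f using Sym2.ind with
          | _ p q => exact H.mem_edgeSet.mpr ⟨G.mem_edgeSet.mp hf, Or.inl hcf⟩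
        · induction f using Sym2.ind with
          | _ p q => exact H.mem_edgeSet.mpr ⟨G.mem_edgeSet.mp hf, Or.inr hcf⟩
      split
      · exact hfcol.2.symm
      · exact hfcol.1.symm
    · simp only [kempeSwap]
      rw [if_neg h1, if_pos h2]
      have hecol : φ e ≠ β ∧ φ e ≠ γ := by
        constructor <;> intro hce <;> refine h1 ⟨?_, v, hv1, hreach h2.1 h2.2 v hv2⟩
        · induction e using Sym2.ind with
          | _ p q => exact H.mem_edgeSet.mpr ⟨G.mem_edgeSet.mp he, Or.inl hce⟩
        · induction e using Sym2.ind with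
          | _ p q => exact H.mem_edgeSet.mpr ⟨G.mem_edgeSet.mp he, Or.inr hce⟩
      split
      · exact hecol.2
      · exact hecol.1
    · simp only [kempeSwap]
      rw [if_neg h1, if_neg h2]
      exact hne

/-- After swapping the component of `w`, if `v` is in that component, had a `β`-edge
and no `γ`-edge, then `β` becomes missing at `v`. -/
lemma kempeSwap_missing_gain {k : ℕ} (hφ : IsProperEdgeColoring G k φ)
    (hβ : β ∈ Finset.Icc 1 k) (hβγ : β ≠ γ) {v : V}
    (hv : (chainGraph G φ β γ).Reachable w v)
    (hγv : γ ∈ missing G k φ v) :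
    β ∈ missing G k (kempeSwap G φ β γ w) v := by
  rw [mem_missing_iff]
  refine ⟨hβ, fun u hu => ?_⟩
  by_cases hcβ : φ s(v, u) = β
  · have hmem : s(v, u) ∈ (chainGraph G φ β γ).edgeSet :=
      (chainGraph G φ β γ).mem_edgeSet.mpr ⟨hu, Or.inl hcβ⟩
    rw [kempeSwap, if_pos ⟨hmem, v, Sym2.mem_mk_left v u, hv⟩, if_pos hcβ]
    exact hβγ.symm
  · by_cases hcγ : φ s(v, u) = γ
    · exact absurd hcγ ((mem_missing_iff.mp hγv).2 u hu)
    · rw [kempeSwap_eq_of_not_mem G φ β γ w hcβ hcγ]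
      exact hcβ

/-- colors other than β, γ keep their missing status everywhere -/
lemma kempeSwap_missing_stable {k : ℕ} {c : ℕ} (hcβ : c ≠ β) (hcγ : c ≠ γ) {v : V}
    (hc : c ∈ missing G k φ v) : c ∈ missing G k (kempeSwap G φ β γ w) v := by
  rw [mem_missing_iff] at hc ⊢
  refine ⟨hc.1, fun u hu => ?_⟩
  rw [kempeSwap]
  split
  · split
    · exact hcγ.symm
    · exact hcβ.symm
  · exact hc.2 u hu

lemma kempeSwap_missing_of_not_reachable {k : ℕ} {c : ℕ} {v : V}
    (hv : ¬ (chainGraph G φ β γ).Reachable w v)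
    (hc : c ∈ missing G k φ v) : c ∈ missing G k (kempeSwap G φ β γ w) v := by
  rw [mem_missing_iff] at hc ⊢
  refine ⟨hc.1, fun u hu => ?_⟩
  rw [kempeSwap_eq_of_not_reachable G φ β γ w hv hu]
  exact hc.2 u hu

/-- max degree 2 in the two-colored subgraph -/
lemma chainGraph_degree_le_two [Fintype V] {k : ℕ} (hφ : IsProperEdgeColoring G k φ) (v : V) :
    (chainGraph G φ β γ).degree v ≤ 2 := by
  rw [← SimpleGraph.card_neighborFinset_eq_degree]
  have h2 : ({β, γ} : Finset ℕ).card ≤ 2 := le_trans (Finset.card_insert_le _ _) (by simp)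
  refine le_trans (Finset.card_le_card_of_injOn (fun u => φ s(v, u)) ?_ ?_) h2
  · intro u hu
    have := ((chainGraph G φ β γ).mem_neighborFinset v u).mp hu
    rcases this.2 with h | h <;> simp [h]
  · intro u hu u' hu' huu'
    by_contra hne
    exact color_inj hφ (((chainGraph G φ β γ).mem_neighborFinset v u).mp hu).1
      (((chainGraph G φ β γ).mem_neighborFinset v u').mp hu').1 hne huu'

lemma chainGraph_degree_le_one [Fintype V] {k : ℕ} (hφ : IsProperEdgeColoring G k φ) {v : V}
    (hγ : γ ∈ missing G k φ v) : (chainGraph G φ β γ).degree v ≤ 1 := by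
  rw [← SimpleGraph.card_neighborFinset_eq_degree]
  have h1 : ({β} : Finset ℕ).card ≤ 1 := by simp
  refine le_trans (Finset.card_le_card_of_injOn (fun u => φ s(v, u)) ?_ ?_) h1
  · intro u hu
    have h := ((chainGraph G φ β γ).mem_neighborFinset v u).mp hu
    rcases h.2 with hcol | hcol
    · simp [hcol]
    · exact absurd hcol ((mem_missing_iff.mp hγ).2 u h.1)
  · intro u hu u' hu' huu'
    by_contra hne
    exact color_inj hφ (((chainGraph G φ β γ).mem_neighborFinset v u).mp hu).1
      (((chainGraph G φ β γ).mem_neighborFinset v u').mp hu').1 hne huu'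

end Kempe

section ThreeEndpoints

/-- a connected graph with max degree 2 cannot contain three mutually reachable
distinct vertices of degree ≤ 1 -/
lemma three_endpoints [Fintype V] (H : SimpleGraph V) (hdeg : ∀ v, H.degree v ≤ 2)
    (a b c : V) (hab : a ≠ b) (hac : a ≠ c) (hbc : b ≠ c)
    (hda : H.degree a ≤ 1) (hdb : H.degree b ≤ 1) (hdc : H.degree c ≤ 1)
    (hrab : H.Reachable a b) (hrac : H.Reachable a c) : False := by
  classical
  set H2 : SimpleGraph V :=
    { Adj := fun u v => H.Adj u v ∧ H.Reachable a u
      symm := by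
        refine ⟨?_⟩; rintro u v ⟨h1, h2⟩
        exact ⟨h1.symm, h2.trans h1.reachable⟩
      loopless := ⟨fun v h => H.loopless.irrefl v h.1⟩ } with hH2
  have hadj2 : ∀ {u v : V}, H2.Adj u v ↔ H.Adj u v ∧ H.Reachable a u := Iff.rfl
  have htrans : ∀ v, H.Reachable a v → H2.Reachable a v := by
    intro v hv
    rw [SimpleGraph.reachable_iff_reflTransGen] at hv
    induction hv with
    | refl => exact SimpleGraph.Reachable.refl a
    | tail hpre hadj ih =>
      refine ih.trans (SimpleGraph.Adj.reachable (hadj2.mpr ⟨hadj, ?_⟩))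
      rw [SimpleGraph.reachable_iff_reflTransGen]
      exact hpre
  set S : Finset V := Finset.univ.filter (fun v => H.Reachable a v) with hS
  have hmemS : ∀ v, v ∈ S ↔ H.Reachable a v := by
    intro v; simp [hS]
  have hdeg2 : ∀ v, H.Reachable a v → H2.degree v = H.degree v := by
    intro v hv
    rw [← SimpleGraph.card_neighborFinset_eq_degree, ← SimpleGraph.card_neighborFinset_eq_degree]
    congr 1
    ext u
    simp only [SimpleGraph.mem_neighborFinset]
    exact ⟨fun h => h.1, fun h => hadj2.mpr ⟨h, hv⟩⟩
  have hdeg0 : ∀ v, ¬ H.Reachable a v → H2.degree v = 0 := by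
    intro v hv
    rw [← SimpleGraph.card_neighborFinset_eq_degree, Finset.card_eq_zero]
    ext u
    simp only [SimpleGraph.mem_neighborFinset, Finset.notMem_empty, iff_false]
    intro h
    exact hv h.2
  -- key: distance-decreasing neighbor
  have key : ∀ v ∈ S.erase a, ∃ u, H2.Adj v u ∧ H2.dist a u < H2.dist a v := by
    intro v hv
    have hva : v ≠ a := (Finset.mem_erase.mp hv).1
    have hr2 : H2.Reachable a v := htrans v ((hmemS v).mp (Finset.mem_erase.mp hv).2)
    have hd : 0 < H2.dist a v := hr2.pos_dist_of_ne (Ne.symm hva)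
    obtain ⟨p, hp⟩ := hr2.exists_walk_length_eq_dist
    obtain ⟨u, hadj, q, hq⟩ := SimpleGraph.Walk.exists_eq_cons_of_ne hva p.reverse
    refine ⟨u, hadj, ?_⟩
    have hle : H2.dist a u ≤ q.reverse.length := SimpleGraph.dist_le _
    have hlen : q.length + 1 = p.length := by
      have h1 := congrArg SimpleGraph.Walk.length hq
      rw [SimpleGraph.Walk.length_reverse] at h1
      simp [SimpleGraph.Walk.length_cons] at h1
      omega
    rw [SimpleGraph.Walk.length_reverse] at hle
    omega
  -- injection into the edge set
  have hinj : (S.erase a).card ≤ H2.edgeFinset.card := by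
    refine Finset.card_le_card_of_injOn
      (fun v => if h : ∃ u, H2.Adj v u ∧ H2.dist a u < H2.dist a v then s(v, h.choose)
        else s(v, v)) ?_ ?_
    · intro v hv
      simp only [dif_pos (key v hv)]
      rw [Finset.mem_coe, SimpleGraph.mem_edgeFinset, SimpleGraph.mem_edgeSet]
      exact (key v hv).choose_spec.1
    · intro v hv v' hv' heq
      simp only [dif_pos (key v hv), dif_pos (key v' hv')] at heq
      rw [Sym2.eq_iff] at heq
      rcases heq with ⟨h1, -⟩ | ⟨h1, h2⟩
      · exact h1
      · exfalso
        have d1 := (key v hv).choose_spec.2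
        have d2 := (key v' hv').choose_spec.2
        rw [h2] at d1
        rw [← h1] at d2
        omega
  have haS : a ∈ S := (hmemS a).mpr (SimpleGraph.Reachable.refl a)
  have hbS : b ∈ S := (hmemS b).mpr hrab
  have hcS : c ∈ S := (hmemS c).mpr hrac
  have hbS' : b ∈ S.erase a := Finset.mem_erase.mpr ⟨hab.symm, hbS⟩
  have hcS' : c ∈ (S.erase a).erase b := Finset.mem_erase.mpr ⟨hbc.symm,
    Finset.mem_erase.mpr ⟨hac.symm, hcS⟩⟩
  -- handshake
  have hhs : ∑ v, H2.degree v = 2 * H2.edgeFinset.card :=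
    SimpleGraph.sum_degrees_eq_twice_card_edges H2
  have hsplit : ∑ v, H2.degree v = ∑ v ∈ S, H.degree v := by
    rw [← Finset.sum_filter_add_sum_filter_not Finset.univ (fun v => H.Reachable a v)
      (fun v => H2.degree v), ← hS]
    have h1 : ∑ v ∈ S, H2.degree v = ∑ v ∈ S, H.degree v :=
      Finset.sum_congr rfl (fun v hv => hdeg2 v ((hmemS v).mp hv))
    have h2 : ∑ v ∈ Finset.univ.filter (fun v => ¬ H.Reachable a v), H2.degree v = 0 :=
      Finset.sum_eq_zero (fun v hv => hdeg0 v (Finset.mem_filter.mp hv).2)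
    rw [h1, h2]
    exact Nat.add_zero _
  -- sum of degrees over S
  set T : Finset V := ((S.erase a).erase b).erase c with hT
  have hsumS : ∑ v ∈ S, H.degree v =
      H.degree a + (H.degree b + (H.degree c + ∑ v ∈ T, H.degree v)) := by
    rw [← Finset.add_sum_erase _ _ haS, ← Finset.add_sum_erase _ _ hbS',
      ← Finset.add_sum_erase _ _ hcS']
  have hsumT : ∑ v ∈ T, H.degree v ≤ 2 * T.card := by
    calc ∑ v ∈ T, H.degree v ≤ ∑ _v ∈ T, 2 := Finset.sum_le_sum (fun v _ => hdeg v)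
      _ = 2 * T.card := by rw [Finset.sum_const]; ring
  -- cardinalities
  have hc1 : (S.erase a).card = S.card - 1 := Finset.card_erase_of_mem haS
  have hc2 : ((S.erase a).erase b).card = (S.erase a).card - 1 := Finset.card_erase_of_mem hbS'
  have hc3 : T.card = ((S.erase a).erase b).card - 1 := Finset.card_erase_of_mem hcS'
  have hpos : 0 < ((S.erase a).erase b).card := Finset.card_pos.mpr ⟨c, hcS'⟩
  have hpos2 : 0 < (S.erase a).card := Finset.card_pos.mpr ⟨b, hbS'⟩
  have hpos3 : 0 < S.card := Finset.card_pos.mpr ⟨a, haS⟩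
  omega

end ThreeEndpoints


section Main

open Stmt8Aux

variable {G : SimpleGraph V} [Fintype V] {Δ : ℕ} {x y : V} {φ : Sym2 V → ℕ}

lemma sxz_ne_sxy {x y z : V} (hxy : x ≠ y) (hzy : z ≠ y) : s(x, z) ≠ s(x, y) := by
  intro h
  rw [Sym2.eq_iff] at h
  rcases h with ⟨-, h⟩ | ⟨h, -⟩
  · exact hzy h
  · exact hxy h

lemma adj_del_iff (hxy : G.Adj x y) {z : V} :
    (G.deleteEdges {s(x, y)}).Adj x z ↔ G.Adj x z ∧ z ≠ y := by
  rw [SimpleGraph.deleteEdges_adj]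
  simp only [Set.mem_singleton_iff]
  constructor
  · rintro ⟨h1, h2⟩
    exact ⟨h1, fun hz => h2 (by rw [hz])⟩
  · rintro ⟨h1, h2⟩
    exact ⟨h1, sxz_ne_sxy hxy.ne h2⟩

lemma noxy (hc : EdgeCritical G Δ) (hxy : G.Adj x y)
    (hφ : IsProperEdgeColoring (G.deleteEdges {s(x, y)}) Δ φ) {c : ℕ}
    (hcx : c ∈ missing (G.deleteEdges {s(x, y)}) Δ φ x)
    (hcy : c ∈ missing (G.deleteEdges {s(x, y)}) Δ φ y) : False :=
  hc.2.1 ⟨_, proper_update hxy hφ hcx hcy⟩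

lemma finz (hc : EdgeCritical G Δ) (hxy : G.Adj x y) {ψ : Sym2 V → ℕ}
    (hψ : IsProperEdgeColoring (G.deleteEdges {s(x, y)}) Δ ψ) {z : V}
    (hxz : G.Adj x z) (hzy : z ≠ y)
    (hα : ψ s(x, z) ∈ missing (G.deleteEdges {s(x, y)}) Δ ψ y) {b : ℕ}
    (hbx : b ∈ missing (G.deleteEdges {s(x, y)}) Δ ψ x)
    (hbz : b ∈ missing (G.deleteEdges {s(x, y)}) Δ ψ z) : False := by
  set G' := G.deleteEdges {s(x, y)} with hG'
  have hadj' : G'.Adj x z := (adj_del_iff hxy).mpr ⟨hxz, hzy⟩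
  set ψ' : Sym2 V → ℕ := fun e => if e = s(x, z) then b else ψ e with hψ'def
  have hψ' : IsProperEdgeColoring G' Δ ψ' :=
    proper_update hadj' (proper_mono (SimpleGraph.deleteEdges_le _) hψ)
      (missing_mono (SimpleGraph.deleteEdges_le _) hbx)
      (missing_mono (SimpleGraph.deleteEdges_le _) hbz)
  have hbα : b ≠ ψ s(x, z) := fun h => (mem_missing_iff.mp hbx).2 z hadj' h.symm
  have hαx : ψ s(x, z) ∈ missing G' Δ ψ' x := by
    rw [mem_missing_iff]
    refine ⟨hψ.1 _ (G'.mem_edgeSet.mpr hadj'), fun u hu => ?_⟩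
    by_cases huz : u = z
    · subst huz
      simp only [hψ'def, if_pos rfl]
      exact hbα
    · have hne : s(x, u) ≠ s(x, z) := sxz_ne_sxy hxz.ne huz
      simp only [hψ'def, if_neg hne]
      exact color_inj hψ hu hadj' huz
  have hαy : ψ s(x, z) ∈ missing G' Δ ψ' y := by
    rw [mem_missing_iff] at hα ⊢
    refine ⟨hα.1, fun u hu => ?_⟩
    have hne : s(y, u) ≠ s(x, z) := by
      intro h
      rw [Sym2.eq_iff] at h
      rcases h with ⟨h, -⟩ | ⟨h, -⟩
      · exact hxy.ne' h
      · exact hzy h.symm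
    simp only [hψ'def, if_neg hne]
    exact hα.2 u hu
  exact noxy hc hxy hψ' hαx hαy

lemma deg_del (hxy : G.Adj x y) : (G.deleteEdges {s(x, y)}).degree x + 1 = G.degree x := by
  rw [← SimpleGraph.card_neighborFinset_eq_degree, ← SimpleGraph.card_neighborFinset_eq_degree]
  have hset : (G.deleteEdges {s(x, y)}).neighborFinset x = (G.neighborFinset x).erase y := by
    ext u
    simp only [SimpleGraph.mem_neighborFinset, Finset.mem_erase, adj_del_iff hxy]
    tauto
  have hy : y ∈ G.neighborFinset x := (G.mem_neighborFinset x y).mpr hxy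
  have hpos : 0 < (G.neighborFinset x).card := Finset.card_pos.mpr ⟨y, hy⟩
  rw [hset, Finset.card_erase_of_mem hy]
  omega

lemma deg_del_y (hxy : G.Adj x y) : (G.deleteEdges {s(x, y)}).degree y + 1 = G.degree y := by
  have h := deg_del hxy.symm
  rwa [(Sym2.eq_swap : s(y, x) = s(x, y))] at h

lemma deg_del_other (hxy : G.Adj x y) {z : V} (hzx : z ≠ x) (hzy : z ≠ y) :
    (G.deleteEdges {s(x, y)}).degree z = G.degree z := by
  rw [← SimpleGraph.card_neighborFinset_eq_degree, ← SimpleGraph.card_neighborFinset_eq_degree]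
  congr 1
  ext u
  simp only [SimpleGraph.mem_neighborFinset, SimpleGraph.deleteEdges_adj,
    Set.mem_singleton_iff]
  constructor
  · exact fun h => h.1
  · intro h
    refine ⟨h, fun heq => ?_⟩
    have : z ∈ s(x, y) := heq ▸ Sym2.mem_mk_left z u
    rcases Sym2.mem_iff.mp this with h' | h'
    · exact hzx h'
    · exact hzy h'

lemma chainGraph_comm (H : SimpleGraph V) (ψ : Sym2 V → ℕ) (β γ : ℕ) :
    chainGraph H ψ β γ = chainGraph H ψ γ β := by
  ext u v
  show H.Adj u v ∧ _ ↔ H.Adj u v ∧ _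
  tauto

lemma swap_case (hc : EdgeCritical G Δ) (hxy : G.Adj x y)
    (hφ : IsProperEdgeColoring (G.deleteEdges {s(x, y)}) Δ φ) {u : V}
    (hu : u = y ∨ (G.Adj x u ∧ u ≠ y ∧
      φ s(x, u) ∈ missing (G.deleteEdges {s(x, y)}) Δ φ y)) {β γ : ℕ}
    (hβx : β ∈ missing (G.deleteEdges {s(x, y)}) Δ φ x)
    (hγu : γ ∈ missing (G.deleteEdges {s(x, y)}) Δ φ u) (hβγ : β ≠ γ)
    (hnr : ¬ (chainGraph (G.deleteEdges {s(x, y)}) φ β γ).Reachable u x) : False := by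
  set G' := G.deleteEdges {s(x, y)} with hG'
  set φ' := kempeSwap G' φ β γ u with hφ'def
  have hβIcc : β ∈ Finset.Icc 1 Δ := missing_subset_Icc hβx
  have hγIcc : γ ∈ Finset.Icc 1 Δ := missing_subset_Icc hγu
  have hφ' : IsProperEdgeColoring G' Δ φ' := kempeSwap_proper G' φ β γ u hφ hβIcc hγIcc hβγ
  have hβu' : β ∈ missing G' Δ φ' u :=
    kempeSwap_missing_gain G' φ β γ u hφ hβIcc hβγ (SimpleGraph.Reachable.refl u) hγu
  have hβx' : β ∈ missing G' Δ φ' x :=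
    kempeSwap_missing_of_not_reachable G' φ β γ u hnr hβx
  rcases hu with rfl | ⟨hxu, huy, hM⟩
  · exact noxy hc hxy hφ' hβx' hβu'
  · have hadj' : G'.Adj x u := (adj_del_iff hxy).mpr ⟨hxu, huy⟩
    have hαβ : φ s(x, u) ≠ β := (mem_missing_iff.mp hβx).2 u hadj'
    have hαγ : φ s(x, u) ≠ γ := by
      intro h
      apply (mem_missing_iff.mp hγu).2 x hadj'.symm
      rwa [(Sym2.eq_swap : s(u, x) = s(x, u))]
    have heq : φ' s(x, u) = φ s(x, u) := kempeSwap_eq_of_not_mem G' φ β γ u hαβ hαγ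
    have hM' : φ' s(x, u) ∈ missing G' Δ φ' y := by
      rw [heq]
      exact kempeSwap_missing_stable G' φ β γ u hαβ hαγ hM
    exact finz hc hxy hφ' hxu huy hM' hβx' hβu'

lemma pair_disj (hc : EdgeCritical G Δ) (hxy : G.Adj x y)
    (hφ : IsProperEdgeColoring (G.deleteEdges {s(x, y)}) Δ φ) {v w : V}
    (hv : v = y ∨ (G.Adj x v ∧ v ≠ y ∧
      φ s(x, v) ∈ missing (G.deleteEdges {s(x, y)}) Δ φ y))
    (hw : w = y ∨ (G.Adj x w ∧ w ≠ y ∧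
      φ s(x, w) ∈ missing (G.deleteEdges {s(x, y)}) Δ φ y))
    (hvw : v ≠ w) {γ : ℕ}
    (hγv : γ ∈ missing (G.deleteEdges {s(x, y)}) Δ φ v)
    (hγw : γ ∈ missing (G.deleteEdges {s(x, y)}) Δ φ w) : False := by
  set G' := G.deleteEdges {s(x, y)} with hG'
  have hγx : γ ∉ missing G' Δ φ x := by
    intro hγx
    rcases hv with rfl | ⟨hxv, hvy, hMv⟩
    · exact noxy hc hxy hφ hγx hγv
    · exact finz hc hxy hφ hxv hvy hMv hγx hγv
  have hdx : G'.degree x + 1 = G.degree x := deg_del hxy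
  have hdxΔ : G.degree x ≤ Δ := hc.1 ▸ G.degree_le_maxDegree x
  have hcard : 0 < (missing G' Δ φ x).card := by
    have h := palette_le G' Δ φ x
    omega
  obtain ⟨β, hβx⟩ := Finset.card_pos.mp hcard
  have hβγ : β ≠ γ := fun h => hγx (h ▸ hβx)
  have hdeg2 : ∀ t, (chainGraph G' φ β γ).degree t ≤ 2 :=
    fun t => chainGraph_degree_le_two G' φ β γ hφ t
  have hdegx : (chainGraph G' φ β γ).degree x ≤ 1 := by
    rw [chainGraph_comm]
    exact chainGraph_degree_le_one G' φ γ β hφ hβx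
  have hdegv : (chainGraph G' φ β γ).degree v ≤ 1 := chainGraph_degree_le_one G' φ β γ hφ hγv
  have hdegw : (chainGraph G' φ β γ).degree w ≤ 1 := chainGraph_degree_le_one G' φ β γ hφ hγw
  have hxv : x ≠ v := by
    rcases hv with rfl | ⟨hxv, -, -⟩
    · exact hxy.ne
    · exact hxv.ne
  have hxw : x ≠ w := by
    rcases hw with rfl | ⟨hxw, -, -⟩
    · exact hxy.ne
    · exact hxw.ne
  have h3 : ¬ ((chainGraph G' φ β γ).Reachable x v ∧ (chainGraph G' φ β γ).Reachable x w) := by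
    rintro ⟨h1, h2⟩
    exact three_endpoints (chainGraph G' φ β γ) hdeg2 x v w hxv hxw hvw hdegx hdegv hdegw h1 h2
  rcases not_and_or.mp h3 with hnr | hnr
  · exact swap_case hc hxy hφ hv hβx hγv hβγ (fun h => hnr h.symm)
  · exact swap_case hc hxy hφ hw hβx hγw hβγ (fun h => hnr h.symm)

end Main

theorem stmt8 (G : SimpleGraph V) [Fintype V] (Δ : ℕ) (hc : EdgeCritical G Δ)
    (x y : V) (hxy : G.Adj x y) (φ : Sym2 V → ℕ)
    (hφ : IsProperEdgeColoring (G.deleteEdges {s(x, y)}) Δ φ)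
    (q : ℝ) (hq0 : 0 < q) (hq1 : (G.degree x : ℝ) < q) (hq2 : q ≤ (Δ : ℝ) - 1) :
    ((Δ : ℝ) - (G.degree y : ℝ) + 1) * ((Δ : ℝ) - q) -
        (G.degree x : ℝ) - (G.degree y : ℝ) + (Δ : ℝ) + 2 ≤
      ∑ z ∈ Finset.univ.filter (fun z => G.Adj x z ∧ z ≠ y ∧ q < (G.degree z : ℝ) ∧
          φ s(x, z) ∈ missing (G.deleteEdges {s(x, y)}) Δ φ y),
        ((G.degree z : ℝ) - q) := by
  classical
  set G' := G.deleteEdges {s(x, y)} with hG'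
  set M := missing G' Δ φ y with hMdef
  have hxyne : x ≠ y := hxy.ne
  have hdxΔ : G.degree x ≤ Δ := hc.1 ▸ G.degree_le_maxDegree x
  have hdyΔ : G.degree y ≤ Δ := hc.1 ▸ G.degree_le_maxDegree y
  have hdx : G'.degree x + 1 = G.degree x := deg_del hxy
  have hdy : G'.degree y + 1 = G.degree y := deg_del_y hxy
  set Zall := Finset.univ.filter (fun z => G.Adj x z ∧ z ≠ y ∧ φ s(x, z) ∈ M) with hZall
  have hmemZall : ∀ z, z ∈ Zall ↔ G.Adj x z ∧ z ≠ y ∧ φ s(x, z) ∈ M := by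
    intro z
    simp [hZall]
  -- every color missing at y appears on an edge from x
  have hsurj : ∀ c ∈ M, ∃ z, z ∈ Zall ∧ φ s(x, z) = c := by
    intro c hcM
    have hcx : c ∉ missing G' Δ φ x := fun h => noxy hc hxy hφ h hcM
    obtain ⟨z, hz, hzc⟩ :=
      Stmt8Aux.exists_edge_of_not_missing (Stmt8Aux.missing_subset_Icc hcM) hcx
    have hz' := (adj_del_iff hxy).mp hz
    exact ⟨z, (hmemZall z).mpr ⟨hz'.1, hz'.2, hzc ▸ hcM⟩, hzc⟩
  have hMZ : M.card ≤ Zall.card := by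
    refine Finset.card_le_card_of_injOn
      (fun c => if h : ∃ z, z ∈ Zall ∧ φ s(x, z) = c then h.choose else x) ?_ ?_
    · intro c hcM
      simp only [dif_pos (hsurj c hcM)]
      exact (hsurj c hcM).choose_spec.1
    · intro c hcM c' hcM' heq
      simp only [dif_pos (hsurj c hcM), dif_pos (hsurj c' hcM')] at heq
      have h1 := (hsurj c hcM).choose_spec.2
      have h2 := (hsurj c' hcM').choose_spec.2
      rw [← h1, ← h2, heq]
  have hMcard : Δ ≤ M.card + G'.degree y := Stmt8Aux.palette_le G' Δ φ y
  -- the fan is elementary: missing sets are pairwise disjoint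
  set Sf := insert x (insert y Zall) with hSf
  have hxZ : x ∉ Zall := fun h => ((hmemZall x).mp h).1.ne rfl
  have hyZ : y ∉ Zall := fun h => ((hmemZall y).mp h).2.1 rfl
  have hxI : x ∉ insert y Zall := by
    rw [Finset.mem_insert]
    rintro (h | h)
    · exact hxyne h
    · exact hxZ h
  have toOr : ∀ t, t = y ∨ t ∈ Zall →
      t = y ∨ (G.Adj x t ∧ t ≠ y ∧ φ s(x, t) ∈ missing G' Δ φ y) := by
    rintro t (rfl | ht)
    · exact Or.inl rfl
    · exact Or.inr ((hmemZall t).mp ht)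
  have hdisj : ∀ u ∈ Sf, ∀ v ∈ Sf, u ≠ v →
      Disjoint (missing G' Δ φ u) (missing G' Δ φ v) := by
    intro u hu v hv huv
    rw [Finset.disjoint_left]
    intro γ hγu hγv
    have hcase : ∀ t, t ∈ Sf → t = x ∨ (t = y ∨ t ∈ Zall) := by
      intro t ht
      rw [hSf, Finset.mem_insert, Finset.mem_insert] at ht
      exact ht
    rcases hcase u hu with rfl | hu'
    · rcases hcase v hv with rfl | hv'
      · exact absurd rfl huv
      · rcases hv' with rfl | hvZ
        · exact noxy hc hxy hφ hγu hγv
        · obtain ⟨hxv, hvy, hMv⟩ := (hmemZall v).mp hvZ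
          exact finz hc hxy hφ hxv hvy hMv hγu hγv
    · rcases hcase v hv with rfl | hv'
      · rcases hu' with rfl | huZ
        · exact noxy hc hxy hφ hγv hγu
        · obtain ⟨hxu, huy, hMu⟩ := (hmemZall u).mp huZ
          exact finz hc hxy hφ hxu huy hMu hγv hγu
      · exact pair_disj hc hxy hφ (toOr u hu') (toOr v hv') huv hγu hγv
  have hsum : ∑ v ∈ Sf, (missing G' Δ φ v).card ≤ Δ := by
    rw [← Finset.card_biUnion hdisj]
    calc (Sf.biUnion (fun v => missing G' Δ φ v)).card
        ≤ (Finset.Icc 1 Δ).card := Finset.card_le_card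
          (Finset.biUnion_subset.mpr (fun v _ => Stmt8Aux.missing_subset_Icc))
      _ = Δ := by simp
  rw [hSf, Finset.sum_insert hxI, Finset.sum_insert hyZ] at hsum
  -- real versions
  have hmx : (Δ : ℝ) - G.degree x + 1 ≤ ((missing G' Δ φ x).card : ℝ) := by
    have h := Stmt8Aux.palette_le G' Δ φ x
    have h2 : ((Δ : ℕ) : ℝ) ≤ ((missing G' Δ φ x).card + G'.degree x : ℕ) := Nat.cast_le.mpr h
    have h3 : ((G'.degree x + 1 : ℕ) : ℝ) = ((G.degree x : ℕ) : ℝ) := by rw [hdx]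
    push_cast at h2 h3
    linarith
  have hmy : (Δ : ℝ) - G.degree y + 1 ≤ ((missing G' Δ φ y).card : ℝ) := by
    have h := Stmt8Aux.palette_le G' Δ φ y
    have h2 : ((Δ : ℕ) : ℝ) ≤ ((missing G' Δ φ y).card + G'.degree y : ℕ) := Nat.cast_le.mpr h
    have h3 : ((G'.degree y + 1 : ℕ) : ℝ) = ((G.degree y : ℕ) : ℝ) := by rw [hdy]
    push_cast at h2 h3
    linarith
  have hmz : ∀ z ∈ Zall, (Δ : ℝ) ≤ ((missing G' Δ φ z).card : ℝ) + G.degree z := by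
    intro z hz
    obtain ⟨hxz, hzy, -⟩ := (hmemZall z).mp hz
    have hzz : G'.degree z = G.degree z := deg_del_other hxy hxz.ne' hzy
    have h := Stmt8Aux.palette_le G' Δ φ z
    rw [hzz] at h
    exact_mod_cast h
  have hsumR : ((missing G' Δ φ x).card : ℝ) + ((missing G' Δ φ y).card : ℝ) +
      ∑ z ∈ Zall, ((missing G' Δ φ z).card : ℝ) ≤ (Δ : ℝ) := by
    have h2 : (((missing G' Δ φ x).card + ((missing G' Δ φ y).card +
        ∑ z ∈ Zall, (missing G' Δ φ z).card) : ℕ) : ℝ) ≤ ((Δ : ℕ) : ℝ) := Nat.cast_le.mpr hsum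
    push_cast at h2
    linarith
  have hZcard : (Δ : ℝ) - G.degree y + 1 ≤ (Zall.card : ℝ) := by
    have h1 : ((Δ : ℕ) : ℝ) ≤ ((M.card + G'.degree y : ℕ) : ℝ) := Nat.cast_le.mpr hMcard
    have h2 : ((M.card : ℕ) : ℝ) ≤ ((Zall.card : ℕ) : ℝ) := Nat.cast_le.mpr hMZ
    have h3 : ((G'.degree y + 1 : ℕ) : ℝ) = ((G.degree y : ℕ) : ℝ) := by rw [hdy]
    push_cast at h1 h2 h3
    linarith
  -- the key inequality over the full fan
  have hkey : ((Δ : ℝ) - (G.degree y : ℝ) + 1) * ((Δ : ℝ) - q) -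
      (G.degree x : ℝ) - (G.degree y : ℝ) + (Δ : ℝ) + 2 ≤
      ∑ z ∈ Zall, ((G.degree z : ℝ) - q) := by
    have e1 : ∑ z ∈ Zall, ((G.degree z : ℝ) - q) =
        ∑ z ∈ Zall, ((G.degree z : ℝ) - Δ) + (Zall.card : ℝ) * ((Δ : ℝ) - q) := by
      calc ∑ z ∈ Zall, ((G.degree z : ℝ) - q)
          = ∑ z ∈ Zall, (((G.degree z : ℝ) - Δ) + ((Δ : ℝ) - q)) :=
            Finset.sum_congr rfl (fun z _ => by ring)
        _ = ∑ z ∈ Zall, ((G.degree z : ℝ) - Δ) + (Zall.card : ℝ) * ((Δ : ℝ) - q) := by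
            rw [Finset.sum_add_distrib, Finset.sum_const, nsmul_eq_mul]
    have e2a : ∑ z ∈ Zall, ((Δ : ℝ) - G.degree z) ≤
        ∑ z ∈ Zall, ((missing G' Δ φ z).card : ℝ) :=
      Finset.sum_le_sum (fun z hz => by have := hmz z hz; linarith)
    have e2b : ∑ z ∈ Zall, ((G.degree z : ℝ) - Δ) =
        - ∑ z ∈ Zall, ((Δ : ℝ) - G.degree z) := by
      rw [← Finset.sum_neg_distrib]
      exact Finset.sum_congr rfl (fun z _ => by ring)
    have e3 : ((Δ : ℝ) - (G.degree y : ℝ) + 1) * ((Δ : ℝ) - q) ≤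
        (Zall.card : ℝ) * ((Δ : ℝ) - q) :=
      mul_le_mul_of_nonneg_right hZcard (by linarith)
    linarith
  -- restrict the sum to vertices of degree > q
  have hfilter : Finset.univ.filter (fun z => G.Adj x z ∧ z ≠ y ∧ q < (G.degree z : ℝ) ∧
      φ s(x, z) ∈ M) = Zall.filter (fun z => q < (G.degree z : ℝ)) := by
    ext z
    rw [Finset.mem_filter, Finset.mem_filter, hmemZall z]
    constructor
    · rintro ⟨-, h1, h2, h3, h4⟩
      exact ⟨⟨h1, h2, h4⟩, h3⟩
    · rintro ⟨⟨h1, h2, h4⟩, h3⟩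
      exact ⟨Finset.mem_univ z, h1, h2, h3, h4⟩
  rw [hfilter]
  have hsplit2 := Finset.sum_filter_add_sum_filter_not Zall
    (fun z => q < (G.degree z : ℝ)) (fun z => (G.degree z : ℝ) - q)
  have hneg : ∑ z ∈ Zall.filter (fun z => ¬ q < (G.degree z : ℝ)),
      ((G.degree z : ℝ) - q) ≤ 0 := by
    refine Finset.sum_nonpos (fun z hz => ?_)
    have h := (Finset.mem_filter.mp hz).2
    push_neg at h
    linarith
  linarith
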